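/- The determinant of the 4×4 matrix with diagonal (Σ-4, Σ-4, Σ, Σ), where Σ = e^{-d₁}+e^{d₁}+e^{-d₂}+e^{d₂}, off-diagonal entries A₁₃ = A₃₁ = e^{-d₁}-e^{d₁}, A₁₄ = A₄₁ = A₂₃ = A₃₂ = e^{-d₂}-e^{d₂}, A₂₄ = A₄₂ = e^{d₁}-e^{-d₁}, and A₁₂ = A₂₁ = A₃₄ = A₄₃ = 0, equals 4·(e^{d₁/2}-e^{-d₁/2})⁴·(e^{d₂/2}-e^{-d₂/2})⁴. -/

import Mathlib

set_option maxHeartbeats 1000000 in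
lemma det4_aux (a b S : ℝ) :
    (!![S - 4, 0, a, b; 0, S - 4, b, -a; a, b, S, 0; b, -a, 0, S] :
      Matrix (Fin 4) (Fin 4) ℝ).det = ((S - 4) * S - (a ^ 2 + b ^ 2)) ^ 2 := by
  simp [Matrix.det_succ_row_zero, Fin.sum_univ_succ, Fin.succAbove, Fin.castSucc, Fin.castAdd, Fin.castLE]
  ring

set_option maxHeartbeats 1000000 in
open Real in
theorem bellman_hessian_det (d₁ d₂ : ℝ) :
    (!![exp (-d₁) + exp d₁ + exp (-d₂) + exp d₂ - 4, 0,
          exp (-d₁) - exp d₁, exp (-d₂) - exp d₂;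
        0, exp (-d₁) + exp d₁ + exp (-d₂) + exp d₂ - 4,
          exp (-d₂) - exp d₂, exp d₁ - exp (-d₁);
        exp (-d₁) - exp d₁, exp (-d₂) - exp d₂,
          exp (-d₁) + exp d₁ + exp (-d₂) + exp d₂, 0;
        exp (-d₂) - exp d₂, exp d₁ - exp (-d₁), 0,
          exp (-d₁) + exp d₁ + exp (-d₂) + exp d₂] :
      Matrix (Fin 4) (Fin 4) ℝ).det
      = 4 * (exp (d₁ / 2) - exp (-(d₁ / 2))) ^ 4 * (exp (d₂ / 2) - exp (-(d₂ / 2))) ^ 4 := by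
  have key := det4_aux (exp (-d₁) - exp d₁) (exp (-d₂) - exp d₂)
    (exp (-d₁) + exp d₁ + exp (-d₂) + exp d₂)
  have hneg : exp d₁ - exp (-d₁) = -(exp (-d₁) - exp d₁) := by ring
  rw [show (!![exp (-d₁) + exp d₁ + exp (-d₂) + exp d₂ - 4, 0,
          exp (-d₁) - exp d₁, exp (-d₂) - exp d₂;
        0, exp (-d₁) + exp d₁ + exp (-d₂) + exp d₂ - 4,
          exp (-d₂) - exp d₂, exp d₁ - exp (-d₁);
        exp (-d₁) - exp d₁, exp (-d₂) - exp d₂,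
          exp (-d₁) + exp d₁ + exp (-d₂) + exp d₂, 0;
        exp (-d₂) - exp d₂, exp d₁ - exp (-d₁), 0,
          exp (-d₁) + exp d₁ + exp (-d₂) + exp d₂] :
      Matrix (Fin 4) (Fin 4) ℝ)
      = !![exp (-d₁) + exp d₁ + exp (-d₂) + exp d₂ - 4, 0,
          exp (-d₁) - exp d₁, exp (-d₂) - exp d₂;
        0, exp (-d₁) + exp d₁ + exp (-d₂) + exp d₂ - 4,
          exp (-d₂) - exp d₂, -(exp (-d₁) - exp d₁);
        exp (-d₁) - exp d₁, exp (-d₂) - exp d₂,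
          exp (-d₁) + exp d₁ + exp (-d₂) + exp d₂, 0;
        exp (-d₂) - exp d₂, -(exp (-d₁) - exp d₁), 0,
          exp (-d₁) + exp d₁ + exp (-d₂) + exp d₂]
    from by rw [hneg]]
  rw [key]
  have hx : exp d₁ = exp (d₁ / 2) ^ 2 := by
    rw [← Real.exp_nat_mul]; ring_nf
  have hy : exp d₂ = exp (d₂ / 2) ^ 2 := by
    rw [← Real.exp_nat_mul]; ring_nf
  have hx' : exp (-d₁) = (exp (d₁ / 2) ^ 2)⁻¹ := by rw [← hx, Real.exp_neg]
  have hy' : exp (-d₂) = (exp (d₂ / 2) ^ 2)⁻¹ := by rw [← hy, Real.exp_neg]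
  have hx'' : exp (-(d₁ / 2)) = (exp (d₁ / 2))⁻¹ := Real.exp_neg _
  have hy'' : exp (-(d₂ / 2)) = (exp (d₂ / 2))⁻¹ := Real.exp_neg _
  have px : exp (d₁ / 2) ≠ 0 := (Real.exp_pos _).ne'
  have py : exp (d₂ / 2) ≠ 0 := (Real.exp_pos _).ne'
  rw [hx, hy, hx', hy', hx'', hy'']
  field_simp
  ring
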